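/- For every tree T with at least 2 vertices, β(T) ≥ (|T| + L(T) − S(T))/2, where L(T) is the number of leaves and S(T) is the number of support vertices of T. -/

import Mathlib

open SimpleGraph Finset

/-- In a tree, the lengths of the paths from a root `r` to two adjacent
vertices differ by exactly one. -/
lemma aux_len_adj {V : Type*} [DecidableEq V] {G : SimpleGraph V} (hT : G.IsTree) {r u v : V}
    (h : G.Adj u v) (p : G.Walk r u) (q : G.Walk r v)
    (hp : p.IsPath) (hq : q.IsPath) :
    q.length = p.length + 1 ∨ p.length = q.length + 1 := by
  by_cases hu : u ∈ q.support
  · -- `q` passes through `u`, and then the tail of `q` from `u` is the edge `uv`.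
    have hdrop : q.dropUntil u hu = Walk.cons h Walk.nil := by
      refine (hT.existsUnique_path u v).unique (hq.dropUntil hu) ?_
      exact Walk.IsPath.nil.cons (by simpa using h.ne)
    have htake : q.takeUntil u hu = p :=
      (hT.existsUnique_path r u).unique (hq.takeUntil hu) hp
    have hlen := congrArg Walk.length (q.take_spec hu)
    rw [Walk.length_append, htake, hdrop] at hlen
    simp only [Walk.length_cons, Walk.length_nil] at hlen
    omega
  · -- otherwise `q.concat (v,u)` is a path from `r` to `u`, hence equals `p`.
    have hcp : (q.concat h.symm).IsPath := by
      rw [← Walk.isPath_reverse_iff, Walk.reverse_concat]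
      refine Walk.IsPath.cons (hq.reverse) ?_
      rw [Walk.support_reverse, List.mem_reverse]
      exact hu
    have := (hT.existsUnique_path r u).unique hp hcp
    rw [this, Walk.length_concat]
    omega

/-- If a connected graph has two adjacent vertices of degree one, then every
vertex is one of these two. -/
lemma aux_two_leaves {V : Type*} [Fintype V] [DecidableEq V] {G : SimpleGraph V}
    [DecidableRel G.Adj] (hC : G.Connected) {u v : V} (h : G.Adj u v)
    (hu : G.degree u = 1) (hv : G.degree v = 1) : ∀ w, w = u ∨ w = v := by
  have hnu : G.neighborFinset u = {v} := by
    refine (Finset.eq_of_subset_of_card_le ?_ ?_).symm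
    · simpa [Finset.singleton_subset_iff, SimpleGraph.mem_neighborFinset] using h
    · simp [← SimpleGraph.card_neighborFinset_eq_degree] at hu
      simp [hu]
  have hnv : G.neighborFinset v = {u} := by
    refine (Finset.eq_of_subset_of_card_le ?_ ?_).symm
    · simpa [Finset.singleton_subset_iff, SimpleGraph.mem_neighborFinset] using h.symm
    · simp [← SimpleGraph.card_neighborFinset_eq_degree] at hv
      simp [hv]
  intro w
  obtain ⟨p, hp⟩ : ∃ p : G.Walk u w, p.IsPath := ⟨(hC u w).some.toPath, (Walk.toPath _).2⟩
  cases p with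
  | nil => exact Or.inl rfl
  | cons h1 p1 =>
    rename_i x
    have hx : x = v := by
      have hm : x ∈ G.neighborFinset u := by simpa [SimpleGraph.mem_neighborFinset] using h1
      rw [hnu, Finset.mem_singleton] at hm
      exact hm
    cases p1 with
    | nil => exact Or.inr hx
    | cons h2 p2 =>
      rename_i y
      have hy : y = u := by
        have hm : y ∈ G.neighborFinset x := by simpa [SimpleGraph.mem_neighborFinset] using h2
        rw [hx, hnv, Finset.mem_singleton] at hm
        exact hm
      exfalso
      rw [Walk.cons_isPath_iff] at hp
      refine hp.2 ?_
      rw [Walk.support_cons]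
      exact List.mem_cons_of_mem _ (hy ▸ p2.start_mem_support)

/-- For every tree `T` with at least 2 vertices,
`β(T) ≥ (|T| + L(T) - S(T))/2`. -/
theorem stmt3 {V : Type*} [Fintype V] [DecidableEq V] (G : SimpleGraph V)
    [DecidableRel G.Adj] (hT : G.IsTree) (hn : 2 ≤ Fintype.card V) :
    ∃ s : Finset V, (∀ u ∈ s, ∀ w ∈ s, ¬ G.Adj u w) ∧
      ((Fintype.card V : ℤ)
        + (univ.filter (fun v => G.degree v = 1)).card
        - (univ.filter (fun v => ∃ u, G.Adj v u ∧ G.degree u = 1)).card)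
        ≤ 2 * s.card := by
  classical
  set Lf : Finset V := univ.filter (fun v => G.degree v = 1) with hLf
  set Sp : Finset V := univ.filter (fun v => ∃ u, G.Adj v u ∧ G.degree u = 1) with hSp
  by_cases hadj : ∃ u v, G.Adj u v ∧ G.degree u = 1 ∧ G.degree v = 1
  · -- two adjacent leaves: the tree is a single edge
    obtain ⟨u, v, huv, hu, hv⟩ := hadj
    have hall := aux_two_leaves hT.isConnected huv hu hv
    have hcard2 : Fintype.card V ≤ 2 := by
      have hsub : (univ : Finset V) ⊆ {u, v} := by
        intro w _
        rcases hall w with rfl | rfl <;> simp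
      calc Fintype.card V ≤ ({u, v} : Finset V).card := Finset.card_le_card hsub
        _ ≤ 2 := Finset.card_insert_le _ _ |>.trans (by simp)
    have hLS : Lf ⊆ Sp := by
      intro w hw
      simp only [hLf, Finset.mem_filter, Finset.mem_univ, true_and] at hw
      simp only [hSp, Finset.mem_filter, Finset.mem_univ, true_and]
      rcases hall w with rfl | rfl
      · exact ⟨v, huv, hv⟩
      · exact ⟨u, huv.symm, hu⟩
    refine ⟨{u}, ?_, ?_⟩
    · intro a ha b hb
      simp only [Finset.mem_singleton] at ha hb
      subst ha; subst hb
      exact G.irrefl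
    · have := Finset.card_le_card hLS
      simp only [Finset.card_singleton]
      push_cast
      omega
  · -- no two adjacent leaves
    push_neg at hadj
    have hne : Nonempty V := hT.isConnected.nonempty
    obtain ⟨r⟩ := hne
    choose f hf _ using (hT.existsUnique_path r ·)
    -- parity coloring
    set c : V → ℕ := fun v => (f v).length % 2 with hc
    have hcadj : ∀ u v, G.Adj u v → c u ≠ c v := by
      intro u v huv
      have := aux_len_adj hT huv (f u) (f v) (hf u) (hf v)
      simp only [hc]
      omega
    set R : Finset V := univ \ (Lf ∪ Sp) with hR
    set A : Finset V := R.filter (fun v => c v = 0) with hA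
    set B : Finset V := R.filter (fun v => ¬ c v = 0) with hB
    have hAB : A.card + B.card = R.card := Finset.card_filter_add_card_filter_not _
    -- the larger of A and B
    set C : Finset V := if A.card ≤ B.card then B else A with hCdef
    have hCR : C ⊆ R := by
      rw [hCdef]
      split <;> [exact Finset.filter_subset _ _; exact Finset.filter_subset _ _]
    have hCcard : R.card ≤ 2 * C.card := by
      rw [hCdef]; split <;> omega
    have hCind : ∀ u ∈ C, ∀ w ∈ C, ¬ G.Adj u w := by
      intro a ha b hb hab
      have hne := hcadj a b hab
      rw [hCdef] at ha hb
      split at ha <;> split at hb <;>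
        simp only [hA, hB, Finset.mem_filter] at ha hb <;>
        simp only [hc] at ha hb hne <;> omega
    refine ⟨Lf ∪ C, ?_, ?_⟩
    · -- independence
      intro a ha b hb hab
      rw [Finset.mem_union] at ha hb
      have hLfmem : ∀ x, x ∈ Lf ↔ G.degree x = 1 := by
        intro x; simp [hLf]
      have hmixed : ∀ x y, x ∈ Lf → y ∈ C → ¬ G.Adj x y := by
        intro x y hx hy hxy
        have hyR : y ∈ R := hCR hy
        have : y ∈ Sp := by
          simp only [hSp, Finset.mem_filter, Finset.mem_univ, true_and]
          exact ⟨x, hxy.symm, (hLfmem x).1 hx⟩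
        rw [hR, Finset.mem_sdiff] at hyR
        exact hyR.2 (Finset.mem_union_right _ this)
      rcases ha with ha | ha <;> rcases hb with hb | hb
      · exact hadj a b hab ((hLfmem a).1 ha) ((hLfmem b).1 hb)
      · exact hmixed a b ha hb hab
      · exact hmixed b a hb ha hab.symm
      · exact hCind a ha b hb hab
    · -- cardinality
      have hdisjLS : Disjoint Lf Sp := by
        rw [Finset.disjoint_left]
        intro x hx hx'
        simp only [hLf, Finset.mem_filter, Finset.mem_univ, true_and] at hx
        simp only [hSp, Finset.mem_filter, Finset.mem_univ, true_and] at hx'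
        obtain ⟨y, hxy, hy⟩ := hx'
        exact hadj x y hxy hx hy
      have hdisjLC : Disjoint Lf C := by
        rw [Finset.disjoint_left]
        intro x hx hx'
        have := hCR hx'
        rw [hR, Finset.mem_sdiff] at this
        exact this.2 (Finset.mem_union_left _ hx)
      have h1 : R.card + (Lf ∪ Sp).card = Fintype.card V := by
        rw [hR]
        rw [Finset.card_sdiff_add_card_eq_card (Finset.subset_univ _)]
        exact Finset.card_univ
      have h2 : (Lf ∪ Sp).card = Lf.card + Sp.card := Finset.card_union_of_disjoint hdisjLS
      have h3 : (Lf ∪ C).card = Lf.card + C.card := Finset.card_union_of_disjoint hdisjLC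
      rw [h3]
      push_cast
      omega
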